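/- Let (μ_n) be a sequence of finite Borel measures on [0,∞) with Laplace transforms μ̂_n(s) = ∫_{[0,∞)} e^{−sy} μ_n(dy). Suppose μ̂_n(s) → φ(s) for every s ≥ 0, where φ is positive and continuous on [0,∞). Then there is a finite measure μ on [0,∞) such that μ_n converges weakly to μ and μ̂ = φ. -/

import Mathlib

open Filter Set Real MeasureTheory


noncomputable section StmtAux

/-- bounded measurable functions are integrable w.r.t. finite measures concentrated on `s`. -/
lemma stmt4_integrable_bdd {ρ : Measure ℝ} [IsFiniteMeasure ρ] {s : Set ℝ}
    (hρ : ρ sᶜ = 0) {g : ℝ → ℝ} (hg : AEStronglyMeasurable g ρ) {C : ℝ}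
    (hC : ∀ x ∈ s, |g x| ≤ C) : Integrable g ρ := by
  refine Integrable.mono' (integrable_const C) hg ?_
  have : {x | ¬ ‖g x‖ ≤ C} ⊆ sᶜ := by
    intro x hx
    simp only [mem_setOf_eq, Real.norm_eq_abs] at hx
    intro hxs
    exact hx (hC x hxs)
  exact (ae_iff).2 (measure_mono_null this hρ)

lemma stmt4_abs_exp_rpow (s y : ℝ) : |Real.exp (-y)| ^ s = Real.exp (-s * y) := by
  rw [abs_of_pos (Real.exp_pos _), Real.rpow_def_of_pos (Real.exp_pos _),
    Real.log_exp]
  ring_nf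

lemma stmt4_cont_abs_rpow {s : ℝ} (hs : 0 ≤ s) : Continuous (fun x : ℝ => |x| ^ s) := by
  rw [continuous_iff_continuousAt]
  intro x
  exact (Real.continuousAt_rpow_const _ _ (Or.inr hs)).comp continuous_abs.continuousAt

/-- support transfer under `y ↦ exp (-y)`. -/
lemma stmt4_map_supp {ρ : Measure ℝ} (hρ : ρ (Set.Iio 0) = 0) :
    (ρ.map (fun y => Real.exp (-y))) (Set.Ioc 0 1)ᶜ = 0 := by
  rw [Measure.map_apply (by fun_prop) (measurableSet_Ioc.compl)]
  refine measure_mono_null ?_ hρ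
  intro y hy
  simp only [mem_preimage, mem_compl_iff, mem_Ioc, not_and_or, not_lt, not_le] at hy
  rcases hy with h | h
  · exact absurd h (not_le.2 (Real.exp_pos _))
  · simp only [mem_Iio]
    by_contra hy0
    push_neg at hy0
    exact absurd (Real.exp_le_one_iff.2 (by linarith)) (not_le.2 h)

end StmtAux

open Classical in
/-- Step-function approximation of the integral of a continuous function against
a finite measure concentrated on `(t 0, t K]`. -/
lemma stmt4_step_approx {ρ : Measure ℝ} [IsFiniteMeasure ρ] {K : ℕ} (hK : 0 < K)
    {t : ℕ → ℝ} (ht : StrictMono t)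
    (hsupp : ρ (Set.Ioc (t 0) (t K))ᶜ = 0) {g : ℝ → ℝ} (hg : Continuous g)
    {ε : ℝ}
    (hosc : ∀ i ∈ Finset.range K, ∀ x ∈ Set.Ioc (t i) (t (i + 1)), |g x - g (t (i + 1))| ≤ ε) :
    |(∫ x, g x ∂ρ) - ∑ i ∈ Finset.range K, g (t (i + 1)) * (ρ (Set.Ioc (t i) (t (i + 1)))).toReal|
      ≤ ε * (ρ Set.univ).toReal := by
  set h : ℝ → ℝ := fun x =>
    ∑ i ∈ Finset.range K, (Set.Ioc (t i) (t (i + 1))).indicator (fun _ => g (t (i + 1))) x with hh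
  -- integrability of g
  obtain ⟨C, hCb⟩ := (isCompact_Icc (a := t 0) (b := t K)).exists_bound_of_continuousOn
    hg.continuousOn
  have hgint : Integrable g ρ := by
    refine stmt4_integrable_bdd hsupp hg.aestronglyMeasurable (C := C) ?_
    intro x hx
    exact hCb x (Set.Ioc_subset_Icc_self hx)
  have hhint : Integrable h ρ := by
    apply integrable_finset_sum
    intro i _
    exact (integrable_const _).indicator measurableSet_Ioc
  -- integral of h
  have hinth : ∫ x, h x ∂ρ
      = ∑ i ∈ Finset.range K, g (t (i + 1)) * (ρ (Set.Ioc (t i) (t (i + 1)))).toReal := by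
    rw [hh, integral_finset_sum]
    · refine Finset.sum_congr rfl (fun i _ => ?_)
      rw [integral_indicator_const _ measurableSet_Ioc, smul_eq_mul, mul_comm]; rfl
    · intro i _
      exact (integrable_const _).indicator measurableSet_Ioc
  -- pointwise bound on the support
  have hae : ∀ᵐ x ∂ρ, ‖g x - h x‖ ≤ ε := by
    rw [ae_iff]
    refine measure_mono_null ?_ hsupp
    intro x hx
    simp only [mem_setOf_eq, not_le] at hx
    intro hxs
    apply absurd hx
    push_neg
    obtain ⟨hx0, hxK⟩ := hxs
    set i := Nat.findGreatest (fun j => t j < x) K with hi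
    have hiP : t i < x := Nat.findGreatest_spec (P := fun j => t j < x) (Nat.zero_le K) hx0
    have hile : i ≤ K := Nat.findGreatest_le K
    have hiK : i < K := by
      rcases lt_or_eq_of_le hile with h' | h'
      · exact h'
      · exact absurd (h' ▸ hiP) (not_lt.2 hxK)
    have hxup : x ≤ t (i + 1) := by
      by_contra hcon
      push_neg at hcon
      exact absurd (Nat.findGreatest_is_greatest (Nat.lt_succ_of_le le_rfl) hiK) (not_not.2 hcon)
    have hhx : h x = g (t (i + 1)) := by
      have hhx' : h x = ∑ j ∈ Finset.range K,
          (Set.Ioc (t j) (t (j + 1))).indicator (fun _ => g (t (j + 1))) x := rfl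
      rw [hhx', Finset.sum_eq_single_of_mem i (Finset.mem_range.2 hiK)]
      · exact Set.indicator_of_mem (show x ∈ Set.Ioc (t i) (t (i + 1)) from ⟨hiP, hxup⟩) _
      · intro j hj hji
        apply Set.indicator_of_notMem
        rcases lt_or_gt_of_ne hji with h' | h'
        · intro hmem
          exact absurd (lt_of_le_of_lt (ht.monotone (Nat.succ_le_of_lt h')) hiP)
            (not_lt.2 hmem.2)
        · intro hmem
          exact absurd (lt_of_le_of_lt (hxup.trans (ht.monotone h')) hmem.1) (lt_irrefl x)
    rw [hhx, Real.norm_eq_abs]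
    exact hosc i (Finset.mem_range.2 hiK) x ⟨hiP, hxup⟩
  calc |(∫ x, g x ∂ρ) - ∑ i ∈ Finset.range K, g (t (i + 1)) * (ρ (Set.Ioc (t i) (t (i + 1)))).toReal|
      = ‖∫ x, (g x - h x) ∂ρ‖ := by
        rw [integral_sub hgint hhint, hinth]; rfl
    _ ≤ ε * (ρ Set.univ).toReal := norm_integral_le_of_norm_le_const hae

/-- Partition with prescribed spacing avoiding a countable set. -/
lemma stmt4_partition {δ : ℝ} (hδ : 0 < δ) {D : Set ℝ} (hD : D.Countable) :
    ∃ t : ℕ → ℝ, StrictMono t ∧ (∀ i : ℕ, t i ∈ Set.Ioo (i * δ - 1) (i * δ - 1 + δ))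
      ∧ ∀ i, t i ∉ D := by
  have hdense : Dense Dᶜ := hD.dense_compl ℝ
  have hex : ∀ i : ℕ, ∃ x, x ∈ Dᶜ ∩ Set.Ioo ((i : ℝ) * δ - 1) ((i : ℝ) * δ - 1 + δ) := by
    intro i
    have : (Set.Ioo ((i : ℝ) * δ - 1) ((i : ℝ) * δ - 1 + δ)).Nonempty := by
      refine ⟨(i : ℝ) * δ - 1 + δ / 2, ?_, ?_⟩ <;> simp <;> linarith
    obtain ⟨x, hx1, hx2⟩ := hdense.exists_mem_open isOpen_Ioo this
    exact ⟨x, hx1, hx2⟩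
  choose t htD htI using fun i => (hex i)
  refine ⟨t, ?_, fun i => (htI i), fun i => htD i⟩
  apply strictMono_nat_of_lt_succ
  intro n
  have h1 := (htI n).2
  have h2 := (htI (n + 1)).1
  have : ((n : ℝ) + 1) * δ - 1 = (n : ℝ) * δ - 1 + δ := by ring
  calc t n < (n : ℝ) * δ - 1 + δ := h1
    _ = ((n : ℝ) + 1) * δ - 1 := by ring
    _ = ((n + 1 : ℕ) : ℝ) * δ - 1 := by push_cast; ring
    _ < t (n + 1) := h2
lemma stmt4_integrable_cont_supp {ρ : Measure ℝ} [IsFiniteMeasure ρ] {a b : ℝ}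
    (hρ : ρ (Set.Ioc a b)ᶜ = 0) {g : ℝ → ℝ} (hg : Continuous g) : Integrable g ρ := by
  obtain ⟨C, hCb⟩ := (isCompact_Icc (a := a) (b := b)).exists_bound_of_continuousOn
    hg.continuousOn
  exact stmt4_integrable_bdd hρ hg.aestronglyMeasurable
    (fun x hx => hCb x (Set.Ioc_subset_Icc_self hx))

lemma stmt4_integral_map_E {m : Measure ℝ} {g : ℝ → ℝ}
    (hg : AEStronglyMeasurable g (m.map (fun y => Real.exp (-y)))) :
    ∫ x, g x ∂(m.map (fun y => Real.exp (-y))) = ∫ y, g (Real.exp (-y)) ∂m :=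
  integral_map (by fun_prop) hg

/-- difference of integrals against two measures concentrated on `(0,1]` with equal
integrals of polynomials. -/
lemma stmt4_cont_integral_eq {ρ₁ ρ₂ : Measure ℝ} [IsFiniteMeasure ρ₁] [IsFiniteMeasure ρ₂]
    (hs₁ : ρ₁ (Set.Ioc 0 1)ᶜ = 0) (hs₂ : ρ₂ (Set.Ioc 0 1)ᶜ = 0)
    (hpoly : ∀ p : Polynomial ℝ, ∫ x, p.eval x ∂ρ₁ = ∫ x, p.eval x ∂ρ₂)
    {f : ℝ → ℝ} (hf : Continuous f) : ∫ x, f x ∂ρ₁ = ∫ x, f x ∂ρ₂ := by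
  set M := (ρ₁ Set.univ).toReal + (ρ₂ Set.univ).toReal with hM
  have hM0 : 0 ≤ M := add_nonneg ENNReal.toReal_nonneg ENNReal.toReal_nonneg
  have key : ∀ ε : ℝ, 0 < ε → |(∫ x, f x ∂ρ₁) - ∫ x, f x ∂ρ₂| ≤ ε := by
    intro ε hε
    have hε' : 0 < ε / (M + 1) := div_pos hε (by linarith)
    obtain ⟨p, hp⟩ := exists_polynomial_near_of_continuousOn 0 1 f
      hf.continuousOn (ε / (M + 1)) hε'
    have hbd : ∀ (ρ : Measure ℝ) [IsFiniteMeasure ρ], ρ (Set.Ioc 0 1)ᶜ = 0 →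
        |(∫ x, f x ∂ρ) - ∫ x, p.eval x ∂ρ| ≤ (ε / (M + 1)) * (ρ Set.univ).toReal := by
      intro ρ _ hρ
      rw [← integral_sub (stmt4_integrable_cont_supp hρ hf)
        (stmt4_integrable_cont_supp hρ p.continuous), ← Real.norm_eq_abs]
      refine norm_integral_le_of_norm_le_const ?_
      rw [ae_iff]
      refine measure_mono_null ?_ hρ
      intro x hx
      simp only [mem_setOf_eq, not_le, Real.norm_eq_abs] at hx
      intro hxs
      have := hp x (Set.Ioc_subset_Icc_self hxs)
      rw [abs_sub_comm] at this
      exact absurd this (not_lt.2 hx.le)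
    have h1 := hbd ρ₁ hs₁
    have h2 := hbd ρ₂ hs₂
    have h3 := hpoly p
    have hle1 : (ε / (M + 1)) * (ρ₁ Set.univ).toReal + (ε / (M + 1)) * (ρ₂ Set.univ).toReal
        ≤ ε := by
      rw [← mul_add, ← hM]
      calc ε / (M + 1) * M ≤ ε / (M + 1) * (M + 1) := by
            apply mul_le_mul_of_nonneg_left (by linarith) hε'.le
        _ = ε := by field_simp
    have hsplit : (∫ x, f x ∂ρ₁) - ∫ x, f x ∂ρ₂
        = ((∫ x, f x ∂ρ₁) - ∫ x, p.eval x ∂ρ₁) + ((∫ x, p.eval x ∂ρ₂) - ∫ x, f x ∂ρ₂) := by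
      rw [h3]; ring
    rw [hsplit]
    refine (abs_add_le _ _).trans (le_trans (add_le_add h1 ?_) hle1)
    rw [abs_sub_comm]; exact h2
  have h0 : |(∫ x, f x ∂ρ₁) - ∫ x, f x ∂ρ₂| ≤ 0 :=
    le_of_forall_pos_le_add (fun ε hε => by simpa using key ε hε)
  exact sub_eq_zero.1 (abs_eq_zero.1 (le_antisymm h0 (abs_nonneg _)))
/-- integrals over all continuous functions determine `ρ (Iic x)` for finite measures. -/
lemma stmt4_Iic_eq {ρ₁ ρ₂ : Measure ℝ} [IsFiniteMeasure ρ₁] [IsFiniteMeasure ρ₂]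
    (hcont : ∀ f : ℝ → ℝ, Continuous f → ∫ x, f x ∂ρ₁ = ∫ x, f x ∂ρ₂) (x : ℝ) :
    ρ₁ (Set.Iic x) = ρ₂ (Set.Iic x) := by
  set F : ℕ → ℝ → ℝ := fun j t => max 0 (min 1 (1 - (j + 1) * (t - x))) with hF
  have hFcont : ∀ j, Continuous (F j) := by
    intro j
    apply continuous_const.max (continuous_const.min (by fun_prop))
  have hFbd : ∀ j t, ‖F j t‖ ≤ 1 := by
    intro j t
    rw [Real.norm_eq_abs, abs_of_nonneg (le_max_left _ _)]
    exact max_le zero_le_one (min_le_left _ _)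
  have hFlim : ∀ t, Tendsto (fun j => F j t) atTop (nhds ((Set.Iic x).indicator (fun _ => (1:ℝ)) t)) := by
    intro t
    rcases le_or_gt t x with h | h
    · have : ∀ j, F j t = 1 := by
        intro j
        rw [hF]
        simp only
        rw [min_eq_left, max_eq_right zero_le_one]
        nlinarith [Nat.cast_nonneg (α := ℝ) j]
      have hind : (Set.Iic x).indicator (fun _ => (1:ℝ)) t = 1 :=
        Set.indicator_of_mem (Set.mem_Iic.2 h) _
      rw [hind]
      simp only [this]
      exact tendsto_const_nhds
    · have hind : (Set.Iic x).indicator (fun _ => (1:ℝ)) t = 0 :=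
        Set.indicator_of_notMem (by simpa using not_le.2 h) _
      rw [hind]
      have : ∀ᶠ j : ℕ in atTop, F j t = 0 := by
        obtain ⟨N, hN⟩ := exists_nat_ge (1 / (t - x))
        filter_upwards [eventually_ge_atTop N] with j hj
        rw [hF]
        simp only
        rw [max_eq_left]
        refine min_le_of_right_le ?_
        have h1 : 1 / (t - x) ≤ (j : ℝ) + 1 := by
          calc (1:ℝ) / (t - x) ≤ N := hN
            _ ≤ j := by exact_mod_cast hj
            _ ≤ j + 1 := by linarith
        have h2 : 1 ≤ ((j : ℝ) + 1) * (t - x) := by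
          rw [div_le_iff₀ (by linarith)] at h1
          linarith
        linarith
      exact Tendsto.congr' (Filter.EventuallyEq.symm this) tendsto_const_nhds
  have hint : ∀ (ρ : Measure ℝ) [IsFiniteMeasure ρ],
      Tendsto (fun j => ∫ t, F j t ∂ρ) atTop (nhds (ρ (Set.Iic x)).toReal) := by
    intro ρ _
    have := MeasureTheory.tendsto_integral_of_dominated_convergence
      (F := fun j t => F j t) (f := (Set.Iic x).indicator (fun _ => (1:ℝ)))
      (bound := fun _ => (1:ℝ)) (μ := ρ)
      (fun j => (hFcont j).aestronglyMeasurable) (integrable_const 1)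
      (fun j => ae_of_all _ (fun t => hFbd j t)) (ae_of_all _ hFlim)
    rwa [integral_indicator_const _ measurableSet_Iic, smul_eq_mul, mul_one] at this
  have heq : ∀ j, ∫ t, F j t ∂ρ₁ = ∫ t, F j t ∂ρ₂ := fun j => hcont (F j) (hFcont j)
  have := tendsto_nhds_unique ((hint ρ₁).congr (fun j => heq j)) (hint ρ₂)
  exact (ENNReal.toReal_eq_toReal_iff' (measure_ne_top _ _) (measure_ne_top _ _)).1 this

/-- A finite measure on `[0,∞)` is determined by its Laplace transform. -/
lemma stmt4_unique {m₁ m₂ : Measure ℝ} [IsFiniteMeasure m₁] [IsFiniteMeasure m₂]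
    (h₁ : m₁ (Set.Iio 0) = 0) (h₂ : m₂ (Set.Iio 0) = 0)
    (h : ∀ s : ℝ, 0 ≤ s → ∫ y, Real.exp (-s * y) ∂m₁ = ∫ y, Real.exp (-s * y) ∂m₂) :
    m₁ = m₂ := by
  set E : ℝ → ℝ := fun y => Real.exp (-y) with hE
  set ρ₁ := m₁.map E with hρ₁
  set ρ₂ := m₂.map E with hρ₂
  haveI : IsFiniteMeasure ρ₁ := m₁.isFiniteMeasure_map E
  haveI : IsFiniteMeasure ρ₂ := m₂.isFiniteMeasure_map E
  have hs₁ : ρ₁ (Set.Ioc 0 1)ᶜ = 0 := stmt4_map_supp h₁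
  have hs₂ : ρ₂ (Set.Ioc 0 1)ᶜ = 0 := stmt4_map_supp h₂
  -- equality of integrals of |x|^s
  have hpow : ∀ s : ℝ, 0 ≤ s → ∫ x, |x| ^ s ∂ρ₁ = ∫ x, |x| ^ s ∂ρ₂ := by
    intro s hs
    rw [hρ₁, hρ₂, stmt4_integral_map_E (stmt4_cont_abs_rpow hs).aestronglyMeasurable,
      stmt4_integral_map_E (stmt4_cont_abs_rpow hs).aestronglyMeasurable]
    simp only [stmt4_abs_exp_rpow]
    exact h s hs
  -- monomials
  have hmono : ∀ k : ℕ, ∫ x, x ^ k ∂ρ₁ = ∫ x, x ^ k ∂ρ₂ := by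
    intro k
    have haeeq : ∀ (ρ : Measure ℝ), ρ (Set.Ioc 0 1)ᶜ = 0 →
        ∫ x, x ^ k ∂ρ = ∫ x, |x| ^ (k : ℝ) ∂ρ := by
      intro ρ hρ
      refine integral_congr_ae ?_
      rw [Filter.eventuallyEq_iff_exists_mem]
      refine ⟨Set.Ioc 0 1, ?_, ?_⟩
      · rw [mem_ae_iff, hρ]
      · intro x hx
        show x ^ k = |x| ^ (k : ℝ)
        rw [abs_of_pos hx.1, Real.rpow_natCast]
    rw [haeeq ρ₁ hs₁, haeeq ρ₂ hs₂]
    exact hpow k (Nat.cast_nonneg k)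
  -- polynomials
  have hpoly : ∀ p : Polynomial ℝ, ∫ x, p.eval x ∂ρ₁ = ∫ x, p.eval x ∂ρ₂ := by
    intro p
    induction p using Polynomial.induction_on' with
    | add p q hp hq =>
      simp only [Polynomial.eval_add]
      rw [integral_add (stmt4_integrable_cont_supp hs₁ p.continuous)
          (stmt4_integrable_cont_supp hs₁ q.continuous),
        integral_add (stmt4_integrable_cont_supp hs₂ p.continuous)
          (stmt4_integrable_cont_supp hs₂ q.continuous), hp, hq]
    | monomial n a =>
      simp only [Polynomial.eval_monomial]
      rw [integral_const_mul, integral_const_mul, hmono n]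
  have hρeq : ρ₁ = ρ₂ :=
    MeasureTheory.Measure.ext_of_Iic ρ₁ ρ₂
      (stmt4_Iic_eq (fun f hf => stmt4_cont_integral_eq hs₁ hs₂ hpoly hf))
  -- recover the original measures
  have hrec : ∀ (m : Measure ℝ), (m.map E).map (fun x => -Real.log x) = m := by
    intro m
    rw [Measure.map_map (g := fun x => -Real.log x) (f := E) Real.measurable_log.neg (by rw [hE]; fun_prop)]
    have : ((fun x => -Real.log x) ∘ E) = id := by
      funext y
      simp [hE, Real.log_exp]
    rw [this, Measure.map_id]
  rw [← hrec m₁, ← hrec m₂, ← hρ₁, ← hρ₂, hρeq]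
lemma stmt4_Ioc_toReal {ρ : Measure ℝ} [IsFiniteMeasure ρ] {a b : ℝ} (h : a ≤ b) :
    (ρ (Set.Ioc a b)).toReal = (ρ (Set.Iic b)).toReal - (ρ (Set.Iic a)).toReal := by
  have hu : ρ (Set.Iic a) + ρ (Set.Ioc a b) = ρ (Set.Iic b) := by
    rw [← measure_union (Set.Iic_disjoint_Ioc le_rfl) measurableSet_Ioc,
      Set.Iic_union_Ioc_eq_Iic h]
  have := congrArg ENNReal.toReal hu
  rw [ENNReal.toReal_add (measure_ne_top _ _) (measure_ne_top _ _)] at this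
  linarith

set_option maxHeartbeats 2000000 in
lemma stmt4_key (μ : ℕ → Measure ℝ) (hfin : ∀ n, IsFiniteMeasure (μ n))
    (hsupp : ∀ n, μ n (Set.Iio 0) = 0) (φ : ℝ → ℝ)
    (hφ_cont : ContinuousOn φ (Set.Ici 0))
    (hconv : ∀ s : ℝ, 0 ≤ s →
      Tendsto (fun n => ∫ y, Real.exp (-s * y) ∂(μ n)) atTop (nhds (φ s)))
    (U : Ultrafilter ℕ) (hU : (U : Filter ℕ) ≤ (atTop : Filter ℕ)) :
    ∃ m : Measure ℝ, IsFiniteMeasure m ∧ m (Set.Iio 0) = 0 ∧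
      (∀ f : ℝ → ℝ, Continuous f → (∃ C, ∀ x, |f x| ≤ C) →
        Tendsto (fun n => ∫ y, f y ∂(μ n)) (U : Filter ℕ) (nhds (∫ y, f y ∂m))) ∧
      (∀ s : ℝ, 0 ≤ s → ∫ y, Real.exp (-s * y) ∂m = φ s) := by
  haveI := hfin
  set E : ℝ → ℝ := fun y => Real.exp (-y) with hE
  set ν : ℕ → Measure ℝ := fun n => (μ n).map E with hν
  haveI : ∀ n, IsFiniteMeasure (ν n) := fun n => (μ n).isFiniteMeasure_map E
  have hνs : ∀ n, ν n (Set.Ioc 0 1)ᶜ = 0 := fun n => stmt4_map_supp (hsupp n)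
  have hνint : ∀ (n : ℕ) (g : ℝ → ℝ), Continuous g →
      ∫ x, g x ∂(ν n) = ∫ y, g (Real.exp (-y)) ∂(μ n) :=
    fun n g hg => stmt4_integral_map_E hg.aestronglyMeasurable
  have hνpow : ∀ (s : ℝ), 0 ≤ s → ∀ n, ∫ x, |x| ^ s ∂(ν n) = ∫ y, Real.exp (-s * y) ∂(μ n) := by
    intro s hs n
    rw [hνint n _ (stmt4_cont_abs_rpow hs)]
    exact integral_congr_ae (Filter.Eventually.of_forall (fun y => stmt4_abs_exp_rpow s y))
  -- masses
  have hmassn : ∀ n, (ν n Set.univ).toReal = ∫ y, Real.exp (-(0:ℝ) * y) ∂(μ n) := by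
    intro n
    have h1 : ν n Set.univ = μ n Set.univ := by
      rw [hν]
      simp only
      rw [Measure.map_apply (by fun_prop) MeasurableSet.univ, Set.preimage_univ]
    rw [h1]
    simp [integral_const]
    rfl
  have hmass : Tendsto (fun n => (ν n Set.univ).toReal) atTop (nhds (φ 0)) := by
    simp_rw [hmassn]
    exact hconv 0 le_rfl
  obtain ⟨C, hC⟩ : ∃ C : ℝ, ∀ n, (ν n Set.univ).toReal ≤ C := by
    obtain ⟨C, hCb⟩ := hmass.bddAbove_range
    exact ⟨C, fun n => hCb ⟨n, rfl⟩⟩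
  have hC0 : (0:ℝ) ≤ C := le_trans ENNReal.toReal_nonneg (hC 0)
  have hφ0 : 0 ≤ φ 0 := ge_of_tendsto hmass (Eventually.of_forall fun n => ENNReal.toReal_nonneg)
  have hφ0C : φ 0 ≤ C := le_of_tendsto hmass (Eventually.of_forall hC)
  -- CDFs along the ultrafilter
  have hFn : ∀ x : ℝ, ∃ L, L ∈ Set.Icc (0:ℝ) C ∧
      Tendsto (fun n => (ν n (Set.Iic x)).toReal) (U : Filter ℕ) (nhds L) := by
    intro x
    have hmem : ∀ n, (ν n (Set.Iic x)).toReal ∈ Set.Icc (0:ℝ) C := by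
      intro n
      refine ⟨ENNReal.toReal_nonneg, le_trans ?_ (hC n)⟩
      exact ENNReal.toReal_mono (measure_ne_top _ _) (measure_mono (Set.subset_univ _))
    obtain ⟨L, hL, hle⟩ := isCompact_Icc.ultrafilter_le_nhds
      (U.map fun n => (ν n (Set.Iic x)).toReal)
      (by
        rw [Ultrafilter.coe_map, le_principal_iff, mem_map]
        exact Filter.univ_mem' hmem)
    refine ⟨L, hL, ?_⟩
    rwa [Filter.Tendsto, ← Ultrafilter.coe_map]
  choose F hFmem hFtendsto using hFn
  have hFnonneg : ∀ x, 0 ≤ F x := fun x => (hFmem x).1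
  have hFmono : Monotone F := by
    intro x y hxy
    refine le_of_tendsto_of_tendsto' (hFtendsto x) (hFtendsto y) (fun n => ?_)
    exact ENNReal.toReal_mono (measure_ne_top _ _) (measure_mono (Set.Iic_subset_Iic.2 hxy))
  have hIic_zero : ∀ (n : ℕ) (x : ℝ), x ≤ 0 → ν n (Set.Iic x) = 0 := by
    intro n x hx
    refine measure_mono_null ?_ (hνs n)
    intro t ht
    simp only [Set.mem_compl_iff, Set.mem_Ioc, not_and_or, not_lt]
    exact Or.inl (le_trans ht hx)
  have hF0 : ∀ x : ℝ, x ≤ 0 → F x = 0 := by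
    intro x hx
    refine tendsto_nhds_unique (hFtendsto x) ?_
    have : (fun n => (ν n (Set.Iic x)).toReal) = fun _ => (0:ℝ) := by
      funext n; rw [hIic_zero n x hx]; simp
    rw [this]
    exact tendsto_const_nhds
  have hIic_univ : ∀ (n : ℕ) (x : ℝ), 1 ≤ x → ν n (Set.Iic x) = ν n Set.univ := by
    intro n x hx
    refine le_antisymm (measure_mono (Set.subset_univ _)) ?_
    have hsub : (Set.univ : Set ℝ) ⊆ Set.Iic x ∪ Set.Ioi x := by
      intro t _
      rcases le_or_gt t x with h | h
      · exact Or.inl h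
      · exact Or.inr h
    have h0 : ν n (Set.Ioi x) = 0 := by
      refine measure_mono_null ?_ (hνs n)
      intro t ht
      simp only [Set.mem_Ioi] at ht
      simp only [Set.mem_compl_iff, Set.mem_Ioc, not_and_or, not_le]
      exact Or.inr (lt_of_le_of_lt hx ht)
    calc ν n Set.univ ≤ ν n (Set.Iic x) + ν n (Set.Ioi x) :=
          le_trans (measure_mono hsub) (measure_union_le _ _)
      _ = ν n (Set.Iic x) := by rw [h0, add_zero]
  have hF1 : ∀ x : ℝ, 1 ≤ x → F x = φ 0 := by
    intro x hx
    refine tendsto_nhds_unique (hFtendsto x) ?_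
    have : (fun n => (ν n (Set.Iic x)).toReal) = fun n => (ν n Set.univ).toReal := by
      funext n; rw [hIic_univ n x hx]
    rw [this]
    exact hmass.mono_left hU
  -- the Stieltjes function
  set G := hFmono.stieltjesFunction with hGdef
  have hGval : ∀ x, G x = Function.rightLim F x := fun x => rfl
  have hFG : ∀ x, F x ≤ G x := fun x => hFmono.le_rightLim le_rfl
  have hGF : ∀ x y : ℝ, x < y → G x ≤ F y := fun x y h => hFmono.rightLim_le h
  have hG0 : ∀ x : ℝ, x < 0 → G x = 0 := by
    intro x hx
    refine le_antisymm ?_ ?_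
    · have := hGF x (x/2) (by linarith)
      rwa [hF0 (x/2) (by linarith)] at this
    · rw [← hF0 x hx.le]; exact hFG x
  have hG1 : ∀ x : ℝ, 1 ≤ x → G x = φ 0 := by
    intro x hx
    refine le_antisymm ?_ ?_
    · have := hGF x (x + 1) (by linarith)
      rwa [hF1 (x+1) (by linarith)] at this
    · rw [← hF1 x hx]; exact hFG x
  have hGbot : Tendsto (fun x => G x) atBot (nhds 0) := by
    refine Tendsto.congr' ?_ tendsto_const_nhds
    filter_upwards [eventually_le_atBot (-1 : ℝ)] with x hx
    exact (hG0 x (by linarith)).symm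
  have hGtop : Tendsto (fun x => G x) atTop (nhds (φ 0)) := by
    refine Tendsto.congr' ?_ tendsto_const_nhds
    filter_upwards [eventually_ge_atTop (1 : ℝ)] with x hx
    exact (hG1 x hx).symm
  set m' := G.measure with hm'def
  haveI : IsFiniteMeasure m' := G.isFiniteMeasure hGbot hGtop
  have hm'univ : m' Set.univ = ENNReal.ofReal (φ 0) := by
    rw [hm'def, G.measure_univ hGbot hGtop, sub_zero]
  have hm'Iic : ∀ x, m' (Set.Iic x) = ENNReal.ofReal (G x) := by
    intro x
    rw [hm'def, G.measure_Iic hGbot, sub_zero]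
  have hm'univ_toReal : (m' Set.univ).toReal = φ 0 := by
    rw [hm'univ, ENNReal.toReal_ofReal hφ0]
  have hm'le : (m' Set.univ).toReal ≤ C := by rw [hm'univ_toReal]; exact hφ0C
  -- continuity points of F
  set D := {x : ℝ | ¬ ContinuousAt F x} with hDdef
  have hD : D.Countable := hFmono.countable_not_continuousAt
  have hGFc : ∀ x, x ∉ D → G x = F x := by
    intro x hx
    rw [hDdef, Set.mem_setOf_eq, not_not] at hx
    rw [hGval]
    exact rightLim_eq_of_tendsto
      (hx.tendsto.mono_left nhdsWithin_le_nhds)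
  -- the main Riemann-sum convergence
  have hmain : ∀ g : ℝ → ℝ, Continuous g →
      Tendsto (fun n => ∫ x, g x ∂(ν n)) (U : Filter ℕ) (nhds (∫ x, g x ∂m')) := by
    intro g hg
    rw [Metric.tendsto_nhds]
    intro ε hε
    set ε₀ := ε / (2 * C + 2) with hε₀def
    have hε₀ : 0 < ε₀ := div_pos hε (by linarith)
    -- uniform continuity on [-1,3]
    obtain ⟨δ₀, hδ₀, hδ₀uc⟩ := (Metric.uniformContinuousOn_iff).1
      ((isCompact_Icc (a := (-1:ℝ)) (b := 3)).uniformContinuousOn_of_continuous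
        hg.continuousOn) ε₀ hε₀
    set δ := min (δ₀ / 4) (1/2) with hδdef
    have hδpos : 0 < δ := lt_min (by linarith) (by norm_num)
    have hδle : δ ≤ 1/2 := min_le_right _ _
    have hδle' : 2 * δ < δ₀ := by
      have : δ ≤ δ₀ / 4 := min_le_left _ _
      linarith
    obtain ⟨t, htmono, htloc, htD⟩ := stmt4_partition hδpos hD
    set K := ⌈(2:ℝ)/δ⌉₊ with hKdef
    have hK : 0 < K := by
      rw [hKdef]
      refine Nat.ceil_pos.2 (div_pos (by norm_num) hδpos)
    have hKδ : (2:ℝ) ≤ K * δ := by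
      rw [hKdef]
      calc (2:ℝ) = (2/δ) * δ := by field_simp
        _ ≤ ⌈(2:ℝ)/δ⌉₊ * δ := by
            apply mul_le_mul_of_nonneg_right (Nat.le_ceil _) hδpos.le
    have ht0neg : t 0 < 0 := by
      have := (htloc 0).2
      simp only [Nat.cast_zero, zero_mul, zero_sub] at this
      linarith
    have ht0gt : -1 < t 0 := by
      have := (htloc 0).1
      simp only [Nat.cast_zero, zero_mul, zero_sub] at this
      linarith
    have htK1 : 1 ≤ t K := by
      have := (htloc K).1
      nlinarith
    have htKle : t K ≤ 2 := by
      have h1 := (htloc K).2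
      have h2 : (K:ℝ) * δ ≤ 2 + δ := by
        rw [hKdef]
        have : (⌈(2:ℝ)/δ⌉₊ : ℝ) ≤ 2/δ + 1 := le_of_lt (Nat.ceil_lt_add_one
          (div_pos (by norm_num) hδpos).le)
        calc (⌈(2:ℝ)/δ⌉₊ : ℝ) * δ ≤ (2/δ + 1) * δ := by
              apply mul_le_mul_of_nonneg_right this hδpos.le
          _ = 2 + δ := by field_simp
      nlinarith
    have htmem : ∀ i ≤ K, t i ∈ Set.Icc (-1:ℝ) 3 := by
      intro i hi
      constructor
      · exact le_trans ht0gt.le (htmono.monotone (Nat.zero_le i))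
      · exact le_trans (htmono.monotone hi) (by linarith)
    have htgap : ∀ i : ℕ, t (i+1) - t i < 2 * δ := by
      intro i
      have h1 := (htloc i).1
      have h2 := (htloc (i+1)).2
      push_cast at h2
      nlinarith
    -- oscillation bound
    have hosc : ∀ i ∈ Finset.range K, ∀ x ∈ Set.Ioc (t i) (t (i + 1)),
        |g x - g (t (i + 1))| ≤ ε₀ := by
      intro i hi x hx
      rw [Finset.mem_range] at hi
      have hxm : x ∈ Set.Icc (-1:ℝ) 3 := by
        constructor
        · exact le_trans (le_trans ht0gt.le (htmono.monotone (Nat.zero_le i))) hx.1.le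
        · exact le_trans hx.2 (le_trans (htmono.monotone hi) (by linarith))
      have htm : t (i+1) ∈ Set.Icc (-1:ℝ) 3 := htmem (i+1) hi
      have hdist : dist x (t (i+1)) < δ₀ := by
        rw [Real.dist_eq, abs_sub_lt_iff]
        constructor
        · linarith [htgap i, hx.1, hx.2]
        · linarith [htgap i, hx.1, hx.2]
      exact (le_of_lt (hδ₀uc x hxm (t (i+1)) htm hdist))
    -- supports
    have hsubIoc : Set.Ioc (0:ℝ) 1 ⊆ Set.Ioc (t 0) (t K) := by
      intro x hx
      exact ⟨lt_of_lt_of_le ht0neg hx.1.le, le_trans hx.2 htK1⟩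
    have hνsupp' : ∀ n, ν n (Set.Ioc (t 0) (t K))ᶜ = 0 :=
      fun n => measure_mono_null (Set.compl_subset_compl.2 hsubIoc) (hνs n)
    have hm'supp' : m' (Set.Ioc (t 0) (t K))ᶜ = 0 := by
      have hcompl : (Set.Ioc (t 0) (t K))ᶜ ⊆ Set.Iic (t 0) ∪ Set.Ioi (t K) := by
        intro x hx
        simp only [Set.mem_compl_iff, Set.mem_Ioc, not_and_or, not_lt, not_le] at hx
        rcases hx with h | h
        · exact Or.inl h
        · exact Or.inr h
      refine measure_mono_null hcompl (le_antisymm (le_trans (measure_union_le _ _) ?_)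
        (zero_le))
      have h1 : m' (Set.Iic (t 0)) = 0 := by
        rw [hm'Iic, hG0 (t 0) ht0neg, ENNReal.ofReal_zero]
      have h2 : m' (Set.Ioi (t K)) = 0 := by
        have : m' (Set.Iic (t K)) = m' Set.univ := by
          rw [hm'Iic, hG1 (t K) htK1, hm'univ]
        rw [← Set.compl_Iic, measure_compl measurableSet_Iic (measure_ne_top _ _), this,
          tsub_self]
      rw [h1, h2, add_zero]
    -- step sums
    set S : ℕ → ℝ := fun n => ∑ i ∈ Finset.range K,
      g (t (i + 1)) * (ν n (Set.Ioc (t i) (t (i + 1)))).toReal with hSdef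
    set Sli : ℝ := ∑ i ∈ Finset.range K,
      g (t (i + 1)) * (m' (Set.Ioc (t i) (t (i + 1)))).toReal with hSlidef
    have hstep_n : ∀ n, |(∫ x, g x ∂(ν n)) - S n| ≤ ε₀ * C := by
      intro n
      refine le_trans (stmt4_step_approx hK htmono (hνsupp' n) hg hosc) ?_
      exact mul_le_mul_of_nonneg_left (hC n) hε₀.le
    have hstep_m : |(∫ x, g x ∂m') - Sli| ≤ ε₀ * C := by
      refine le_trans (stmt4_step_approx hK htmono hm'supp' hg hosc) ?_
      exact mul_le_mul_of_nonneg_left hm'le hε₀.le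
    have hSconv : Tendsto S (U : Filter ℕ) (nhds Sli) := by
      have hterm : ∀ i ∈ Finset.range K,
          Tendsto (fun n => g (t (i + 1)) * (ν n (Set.Ioc (t i) (t (i + 1)))).toReal)
            (U : Filter ℕ)
            (nhds (g (t (i + 1)) * (m' (Set.Ioc (t i) (t (i + 1)))).toReal)) := by
        intro i _
        have hle : t i ≤ t (i+1) := (htmono (Nat.lt_succ_self i)).le
        have hm'Ioc : (m' (Set.Ioc (t i) (t (i+1)))).toReal = F (t (i+1)) - F (t i) := by
          rw [hm'def, G.measure_Ioc, ENNReal.toReal_ofReal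
            (by linarith [G.mono hle] : (0:ℝ) ≤ G (t (i+1)) - G (t i)),
            hGFc _ (htD (i+1)), hGFc _ (htD i)]
        have hνIoc : ∀ n, (ν n (Set.Ioc (t i) (t (i+1)))).toReal
            = (ν n (Set.Iic (t (i+1)))).toReal - (ν n (Set.Iic (t i))).toReal :=
          fun n => stmt4_Ioc_toReal hle
        rw [hm'Ioc]
        simp_rw [hνIoc]
        exact ((hFtendsto (t (i+1))).sub (hFtendsto (t i))).const_mul _
      rw [hSdef, hSlidef]
      exact tendsto_finset_sum _ hterm
    have hSev : ∀ᶠ n in (U : Filter ℕ), |S n - Sli| < ε₀ := by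
      have := Metric.tendsto_nhds.1 hSconv ε₀ hε₀
      filter_upwards [this] with n hn
      rwa [Real.dist_eq] at hn
    filter_upwards [hSev] with n hn
    rw [Real.dist_eq]
    have : (∫ x, g x ∂(ν n)) - ∫ x, g x ∂m'
        = ((∫ x, g x ∂(ν n)) - S n) + (S n - Sli) + (Sli - ∫ x, g x ∂m') := by ring
    rw [this]
    have habs : |((∫ x, g x ∂(ν n)) - S n) + (S n - Sli) + (Sli - ∫ x, g x ∂m')|
        ≤ ε₀ * C + ε₀ + ε₀ * C := by
      refine le_trans (abs_add_le _ _) ?_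
      refine add_le_add (le_trans (abs_add_le _ _) (add_le_add (hstep_n n) hn.le)) ?_
      rw [abs_sub_comm]
      exact hstep_m
    refine lt_of_le_of_lt habs ?_
    have heq : ε₀ * (2 * C + 2) = ε := by
      rw [hε₀def]; field_simp
    have hexp : ε₀ * (2 * C + 2) = 2 * (ε₀ * C) + 2 * ε₀ := by ring
    linarith
  -- Laplace transform of m'
  have hLm' : ∀ s : ℝ, 0 ≤ s → ∫ x, |x| ^ s ∂m' = φ s := by
    intro s hs
    refine tendsto_nhds_unique (hmain _ (stmt4_cont_abs_rpow hs)) ?_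
    exact ((hconv s hs).mono_left hU).congr (fun n => (hνpow s hs n).symm)
  -- m' gives no mass to (-∞, 0)
  have hm'Iio : m' (Set.Iio 0) = 0 := by
    have hsub : Set.Iio (0:ℝ) ⊆ ⋃ k : ℕ, Set.Iic (-(1/((k:ℝ)+1))) := by
      intro x hx
      simp only [Set.mem_Iio] at hx
      obtain ⟨k, hk⟩ := exists_nat_one_div_lt (show (0:ℝ) < -x by linarith)
      exact Set.mem_iUnion.2 ⟨k, by simp only [Set.mem_Iic]; linarith⟩
    refine measure_mono_null hsub (measure_iUnion_null fun k => ?_)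
    have hneg : -(1/((k:ℝ)+1)) < 0 := by
      have : (0:ℝ) < 1/((k:ℝ)+1) := by positivity
      linarith
    rw [hm'Iic, hG0 _ hneg, ENNReal.ofReal_zero]
  have hIoi1 : m' (Set.Ioi 1) = 0 := by
    have heq : m' (Set.Iic 1) = m' Set.univ := by
      rw [hm'Iic, hG1 1 le_rfl, hm'univ]
    rw [← Set.compl_Iic, measure_compl measurableSet_Iic (measure_ne_top _ _), heq, tsub_self]
  -- m'({0}) = 0, using continuity of φ at 0
  have hm'zero : m' ({(0:ℝ)} : Set ℝ) = 0 := by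
    set sk : ℕ → ℝ := fun k => 1/((k:ℝ)+1) with hskdef
    have hskpos : ∀ k, 0 < sk k := fun k => by positivity
    have hsk0 : Tendsto sk atTop (nhds 0) := tendsto_one_div_add_atTop_nhds_zero_nat
    have hAe : m' (Set.Icc (0:ℝ) 1)ᶜ = 0 := by
      have hsub : (Set.Icc (0:ℝ) 1)ᶜ ⊆ Set.Iio 0 ∪ Set.Ioi 1 := by
        intro x hx
        simp only [Set.mem_compl_iff, Set.mem_Icc, not_and_or, not_le] at hx
        rcases hx with hx | hx
        · exact Or.inl hx
        · exact Or.inr hx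
      refine measure_mono_null hsub ?_
      refine le_antisymm (le_trans (measure_union_le _ _) ?_) (zero_le)
      rw [hm'Iio, hIoi1, add_zero]
    have hbound : ∀ k, ∀ᵐ x ∂m', ‖|x| ^ (sk k)‖ ≤ (1:ℝ) := by
      intro k
      rw [ae_iff]
      refine measure_mono_null ?_ hAe
      intro x hx
      simp only [Set.mem_setOf_eq, not_le, Real.norm_eq_abs] at hx
      intro hxs
      have h1 : |x| ≤ 1 := by
        rw [abs_le]; exact ⟨by linarith [hxs.1], hxs.2⟩
      have h2 : |(|x| ^ (sk k))| = |x| ^ (sk k) :=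
        abs_of_nonneg (Real.rpow_nonneg (abs_nonneg x) _)
      rw [h2] at hx
      exact absurd (Real.rpow_le_one (abs_nonneg x) h1 (hskpos k).le) (not_le.2 hx)
    have hlim : ∀ x : ℝ, Tendsto (fun k => |x| ^ (sk k)) atTop
        (nhds (Set.indicator ({(0:ℝ)}ᶜ) (fun _ => (1:ℝ)) x)) := by
      intro x
      rcases eq_or_ne x 0 with rfl | hx
      · have hval : ∀ k, |(0:ℝ)| ^ (sk k) = 0 := by
          intro k
          rw [abs_zero, Real.zero_rpow (hskpos k).ne']
        have hind : Set.indicator ({(0:ℝ)}ᶜ) (fun _ => (1:ℝ)) 0 = 0 :=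
          Set.indicator_of_notMem (by simp) _
        rw [hind]
        simp only [hval]
        exact tendsto_const_nhds
      · have hpos : 0 < |x| := abs_pos.2 hx
        have hval : ∀ k, |x| ^ (sk k) = Real.exp (Real.log |x| * sk k) := by
          intro k
          rw [Real.rpow_def_of_pos hpos]
        have hind : Set.indicator ({(0:ℝ)}ᶜ) (fun _ => (1:ℝ)) x = 1 :=
          Set.indicator_of_mem (by simp [hx]) _
        rw [hind]
        simp only [hval]
        have h1 : Tendsto (fun k => Real.log |x| * sk k) atTop (nhds 0) := by
          have := hsk0.const_mul (Real.log |x|)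
          rwa [mul_zero] at this
        have := (Real.continuous_exp.tendsto 0).comp h1
        rwa [Real.exp_zero] at this
    have hDCT := MeasureTheory.tendsto_integral_of_dominated_convergence
      (F := fun k x => |x| ^ (sk k)) (bound := fun _ => (1:ℝ)) (μ := m')
      (fun k => (stmt4_cont_abs_rpow (hskpos k).le).aestronglyMeasurable)
      (integrable_const 1) hbound (Filter.Eventually.of_forall hlim)
    have hlhs : (fun k => ∫ x, |x| ^ (sk k) ∂m') = fun k => φ (sk k) := by
      funext k; exact hLm' _ (hskpos k).le
    rw [hlhs] at hDCT
    have hφcont0 : Tendsto (fun k => φ (sk k)) atTop (nhds (φ 0)) := by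
      have hc : Tendsto φ (nhdsWithin 0 (Set.Ici 0)) (nhds (φ 0)) :=
        hφ_cont 0 Set.self_mem_Ici
      refine hc.comp ?_
      rw [tendsto_nhdsWithin_iff]
      exact ⟨hsk0, Filter.Eventually.of_forall fun k => (hskpos k).le⟩
    have huniq := tendsto_nhds_unique hDCT hφcont0
    have hint : ∫ x, Set.indicator ({(0:ℝ)}ᶜ) (fun _ => (1:ℝ)) x ∂m'
        = (m' ({(0:ℝ)}ᶜ : Set ℝ)).toReal := by
      rw [integral_indicator_const _ (measurableSet_singleton 0).compl, smul_eq_mul, mul_one]; rfl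
    rw [hint] at huniq
    have hA : m' ({(0:ℝ)}ᶜ : Set ℝ) = m' Set.univ := by
      refine (ENNReal.toReal_eq_toReal_iff' (measure_ne_top _ _) (measure_ne_top _ _)).1 ?_
      rw [huniq, hm'univ_toReal]
    have hadd := measure_add_measure_compl (μ := m') (measurableSet_singleton 0)
    rw [hA] at hadd
    have : m' {(0:ℝ)} + m' Set.univ = 0 + m' Set.univ := by rw [zero_add]; exact hadd
    exact (ENNReal.add_left_inj (measure_ne_top _ _)).1 this
  have hm'Iic0 : m' (Set.Iic 0) = 0 := by
    have hs : Set.Iic (0:ℝ) = Set.Iio 0 ∪ {0} := by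
      rw [Set.Iio_union_right]
    rw [hs]
    refine le_antisymm (le_trans (measure_union_le _ _) ?_) (zero_le)
    rw [hm'Iio, hm'zero, add_zero]
  have hm'supp : m' (Set.Ioc 0 1)ᶜ = 0 := by
    have hsub : (Set.Ioc (0:ℝ) 1)ᶜ ⊆ Set.Iic 0 ∪ Set.Ioi 1 := by
      intro x hx
      simp only [Set.mem_compl_iff, Set.mem_Ioc, not_and_or, not_lt, not_le] at hx
      rcases hx with hx | hx
      · exact Or.inl hx
      · exact Or.inr hx
    refine measure_mono_null hsub ?_
    refine le_antisymm (le_trans (measure_union_le _ _) ?_) (zero_le)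
    rw [hm'Iic0, hIoi1, add_zero]
  -- define the limit measure
  set Lg : ℝ → ℝ := fun x => -Real.log x with hLgdef
  have hLgmeas : Measurable Lg := Real.measurable_log.neg
  have hLgE : ∀ y : ℝ, Lg (Real.exp (-y)) = y := by
    intro y; rw [hLgdef]; simp [Real.log_exp]
  refine ⟨m'.map Lg, m'.isFiniteMeasure_map Lg, ?_, ?_, ?_⟩
  · -- no mass on (-∞, 0)
    rw [Measure.map_apply hLgmeas measurableSet_Iio]
    refine measure_mono_null ?_ hm'supp
    intro x hx
    simp only [Set.mem_preimage, Set.mem_Iio, hLgdef] at hx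
    intro hxs
    have : Real.log x ≤ 0 := Real.log_nonpos hxs.1.le hxs.2
    linarith
  · -- weak convergence along the ultrafilter
    intro f hf hfbd
    obtain ⟨Cf, hCf⟩ := hfbd
    have hCf0 : (0:ℝ) ≤ Cf := le_trans (abs_nonneg _) (hCf 0)
    have hfm : ∀ ρ : Measure ℝ, AEStronglyMeasurable (fun x => f (Lg x)) ρ :=
      fun ρ => (hf.measurable.comp hLgmeas).aestronglyMeasurable
    have htrans1 : ∀ n, ∫ y, f y ∂(μ n) = ∫ x, f (Lg x) ∂(ν n) := by
      intro n
      rw [hν]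
      simp only
      rw [stmt4_integral_map_E (hfm _)]
      exact (integral_congr_ae (Filter.Eventually.of_forall fun y => by rw [hLgE])).symm
    have htrans2 : ∫ y, f y ∂(m'.map Lg) = ∫ x, f (Lg x) ∂m' :=
      integral_map hLgmeas.aemeasurable hf.aestronglyMeasurable
    rw [Metric.tendsto_nhds]
    intro ε hε
    set ε₁ := ε / (3 * Cf + 2) with hε₁def
    have hε₁ : 0 < ε₁ := div_pos hε (by linarith)
    -- choose a small cutoff point δ
    have hG0' : G 0 = 0 := by
      have h1 : ENNReal.ofReal (G 0) = 0 := by rw [← hm'Iic, hm'Iic0]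
      have h2 : (0:ℝ) ≤ G 0 := le_trans (hFnonneg 0) (hFG 0)
      have := ENNReal.ofReal_eq_zero.1 h1
      linarith
    obtain ⟨δ, hδprop⟩ : ∃ δ : ℝ, (G δ < ε₁ ∧ δ < 1) ∧ 0 < δ := by
      have hrc : Tendsto (fun x => G x) (nhdsWithin 0 (Set.Ici 0)) (nhds (G 0)) :=
        G.right_continuous 0
      rw [hG0'] at hrc
      have h1 : ∀ᶠ x in nhdsWithin 0 (Set.Ici 0), G x < ε₁ := hrc.eventually_lt_const hε₁
      have h2 : ∀ᶠ x in nhdsWithin (0:ℝ) (Set.Ioi 0), G x < ε₁ :=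
        h1.filter_mono (nhdsWithin_mono 0 Set.Ioi_subset_Ici_self)
      have h3 : ∀ᶠ x in nhdsWithin (0:ℝ) (Set.Ioi 0), x < 1 := by
        filter_upwards [Ioo_mem_nhdsGT (zero_lt_one)] with x hx
        exact hx.2
      have h4 : ∀ᶠ x in nhdsWithin (0:ℝ) (Set.Ioi 0), 0 < x :=
        eventually_mem_nhdsWithin.mono (fun x hx => hx)
      exact ((h2.and h3).and h4).exists
    obtain ⟨⟨hGδ, hδ1⟩, hδpos⟩ := hδprop
    -- tail bound along the ultrafilter
    have htail : ∀ᶠ n in (U : Filter ℕ), (ν n (Set.Iic δ)).toReal < 2 * ε₁ := by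
      have h1 : F δ < ε₁ := lt_of_le_of_lt (hFG δ) hGδ
      filter_upwards [Metric.tendsto_nhds.1 (hFtendsto δ) ε₁ hε₁] with n hn
      rw [Real.dist_eq] at hn
      have := abs_lt.1 hn
      linarith
    -- the cutoff function
    set χ : ℝ → ℝ := fun x => max 0 (min 1 ((x - δ/2)/(δ/2))) with hχdef
    have hχcont : Continuous χ :=
      continuous_const.max (continuous_const.min ((continuous_id.sub continuous_const).div_const _))
    have hχ01 : ∀ x, 0 ≤ χ x ∧ χ x ≤ 1 :=
      fun x => ⟨le_max_left _ _, max_le zero_le_one (min_le_left _ _)⟩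
    have hχ0 : ∀ x : ℝ, x ≤ δ/2 → χ x = 0 := by
      intro x hx
      rw [hχdef]
      simp only
      rw [max_eq_left]
      refine min_le_of_right_le ?_
      exact div_nonpos_iff.2 (Or.inr ⟨by linarith, by linarith⟩)
    have hχ1 : ∀ x : ℝ, δ ≤ x → χ x = 1 := by
      intro x hx
      rw [hχdef]
      simp only
      rw [min_eq_left, max_eq_right zero_le_one]
      rw [le_div_iff₀ (by linarith : (0:ℝ) < δ/2)]
      linarith
    set h : ℝ → ℝ := fun x => f (Lg x) * χ x with hhdef
    have hhcont : Continuous h := by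
      rw [continuous_iff_continuousAt]
      intro x
      rcases lt_or_ge 0 x with hx | hx
      · exact ((hf.continuousAt).comp ((Real.continuousAt_log hx.ne').neg)).mul
          hχcont.continuousAt
      · have hev : (fun _ : ℝ => (0:ℝ)) =ᶠ[nhds x] h := by
          filter_upwards [IsOpen.mem_nhds isOpen_Iio
            (show x ∈ Set.Iio (δ/2) from lt_of_le_of_lt hx (by linarith))] with y hy
          rw [hhdef]
          simp only
          rw [hχ0 y (le_of_lt hy), mul_zero]
        exact ContinuousAt.congr continuousAt_const hev
    have hmainh := hmain h hhcont
    -- comparison of f∘Lg with h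
    have hcmp : ∀ (ρ : Measure ℝ) [IsFiniteMeasure ρ],
        AEStronglyMeasurable (fun x => f (Lg x)) ρ →
        |(∫ x, f (Lg x) ∂ρ) - ∫ x, h x ∂ρ| ≤ Cf * (ρ (Set.Iic δ)).toReal := by
      intro ρ _ hmeas
      have hint1 : Integrable (fun x => f (Lg x)) ρ :=
        stmt4_integrable_bdd (s := Set.univ) (by simp) hmeas (fun x _ => hCf _)
      have hint2 : Integrable h ρ := by
        refine stmt4_integrable_bdd (s := Set.univ) (by simp)
          (hmeas.mul hχcont.aestronglyMeasurable) (C := Cf) (fun x _ => ?_)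
        rw [hhdef]
        simp only
        rw [abs_mul]
        calc |f (Lg x)| * |χ x| ≤ Cf * 1 := by
              refine mul_le_mul (hCf _) ?_ (abs_nonneg _) hCf0
              rw [abs_of_nonneg (hχ01 x).1]
              exact (hχ01 x).2
          _ = Cf := mul_one Cf
      rw [← integral_sub hint1 hint2]
      have hb : ∀ x, ‖f (Lg x) - h x‖ ≤ Set.indicator (Set.Iic δ) (fun _ => Cf) x := by
        intro x
        rcases le_or_gt x δ with hx | hx
        · have hind : Set.indicator (Set.Iic δ) (fun _ => Cf) x = Cf :=
            Set.indicator_of_mem (Set.mem_Iic.2 hx) _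
          rw [hind, hhdef, Real.norm_eq_abs]
          have : f (Lg x) - f (Lg x) * χ x = f (Lg x) * (1 - χ x) := by ring
          rw [this, abs_mul]
          calc |f (Lg x)| * |1 - χ x| ≤ Cf * 1 := by
                refine mul_le_mul (hCf _) ?_ (abs_nonneg _) hCf0
                rw [abs_of_nonneg (by linarith [(hχ01 x).2])]
                linarith [(hχ01 x).1]
            _ = Cf := mul_one Cf
        · have hind : Set.indicator (Set.Iic δ) (fun _ => Cf) x = 0 :=
            Set.indicator_of_notMem (by simpa using not_le.2 hx) _
          rw [hind, hhdef, Real.norm_eq_abs]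
          have : f (Lg x) - f (Lg x) * χ x = 0 := by
            rw [hχ1 x hx.le]; ring
          rw [this, abs_zero]
      calc ‖∫ x, (f (Lg x) - h x) ∂ρ‖
          ≤ ∫ x, ‖f (Lg x) - h x‖ ∂ρ := norm_integral_le_integral_norm _
        _ ≤ ∫ x, Set.indicator (Set.Iic δ) (fun _ => Cf) x ∂ρ := by
            refine integral_mono (hint1.sub hint2).norm
              ((integrable_const Cf).indicator measurableSet_Iic) hb
        _ = Cf * (ρ (Set.Iic δ)).toReal := by
            rw [integral_indicator_const _ measurableSet_Iic, smul_eq_mul, mul_comm]; rfl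
    filter_upwards [htail, Metric.tendsto_nhds.1 hmainh ε₁ hε₁] with n hn1 hn2
    rw [Real.dist_eq, htrans1 n, htrans2]
    have e1 : |(∫ x, f (Lg x) ∂(ν n)) - ∫ x, h x ∂(ν n)| ≤ Cf * (2 * ε₁) :=
      le_trans (hcmp (ν n) (hfm _)) (mul_le_mul_of_nonneg_left hn1.le hCf0)
    have e2 : |(∫ x, f (Lg x) ∂m') - ∫ x, h x ∂m'| ≤ Cf * ε₁ := by
      refine le_trans (hcmp m' (hfm _)) ?_
      have hGδ0 : (0:ℝ) ≤ G δ := le_trans (hFnonneg δ) (hFG δ)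
      rw [hm'Iic, ENNReal.toReal_ofReal hGδ0]
      exact mul_le_mul_of_nonneg_left hGδ.le hCf0
    rw [Real.dist_eq] at hn2
    have hsplit : (∫ x, f (Lg x) ∂(ν n)) - ∫ x, f (Lg x) ∂m'
        = ((∫ x, f (Lg x) ∂(ν n)) - ∫ x, h x ∂(ν n))
          + ((∫ x, h x ∂(ν n)) - ∫ x, h x ∂m')
          + ((∫ x, h x ∂m') - ∫ x, f (Lg x) ∂m') := by ring
    rw [hsplit]
    have habs : |((∫ x, f (Lg x) ∂(ν n)) - ∫ x, h x ∂(ν n))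
          + ((∫ x, h x ∂(ν n)) - ∫ x, h x ∂m')
          + ((∫ x, h x ∂m') - ∫ x, f (Lg x) ∂m')|
        ≤ Cf * (2 * ε₁) + ε₁ + Cf * ε₁ := by
      refine le_trans (abs_add_le _ _) (add_le_add (le_trans (abs_add_le _ _)
        (add_le_add e1 hn2.le)) ?_)
      rw [abs_sub_comm]
      exact e2
    refine lt_of_le_of_lt habs ?_
    have heq : ε₁ * (3 * Cf + 2) = ε := by rw [hε₁def]; field_simp
    have h1 : Cf * (2 * ε₁) + ε₁ + Cf * ε₁ = ε₁ * (3 * Cf + 1) := by ring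
    have h2 : ε₁ * (3 * Cf + 1) < ε₁ * (3 * Cf + 2) :=
      mul_lt_mul_of_pos_left (by linarith) hε₁
    rw [h1, ← heq]; exact h2
  · -- Laplace transform of m
    intro s hs
    rw [integral_map hLgmeas.aemeasurable (Continuous.aestronglyMeasurable (by fun_prop))]
    rw [← hLm' s hs]
    refine integral_congr_ae ?_
    rw [Filter.eventuallyEq_iff_exists_mem]
    refine ⟨Set.Ioc 0 1, by rw [mem_ae_iff, hm'supp], ?_⟩
    intro x hx
    show Real.exp (-s * Lg x) = |x| ^ s
    rw [hLgdef]
    simp only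
    rw [abs_of_pos hx.1, Real.rpow_def_of_pos hx.1]
    ring_nf
/-- Extended continuity theorem for Laplace transforms of finite measures on `[0,∞)`:
if the Laplace transforms of finite measures `μ_n` converge pointwise to a positive
continuous function `φ`, then `μ_n` converges weakly to a finite measure `μ` with
Laplace transform `φ`. -/
theorem stmt4
    (μ : ℕ → Measure ℝ)
    (hfin : ∀ n, IsFiniteMeasure (μ n))
    (hsupp : ∀ n, μ n (Set.Iio 0) = 0)
    (φ : ℝ → ℝ)
    (hφ_pos : ∀ s : ℝ, 0 ≤ s → 0 < φ s)
    (hφ_cont : ContinuousOn φ (Set.Ici 0))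
    (hconv : ∀ s : ℝ, 0 ≤ s →
      Tendsto (fun n => ∫ y, Real.exp (-s * y) ∂(μ n)) atTop (nhds (φ s))) :
    ∃ m : Measure ℝ, IsFiniteMeasure m ∧ m (Set.Iio 0) = 0 ∧
      (∀ f : ℝ → ℝ, Continuous f → (∃ C, ∀ x, |f x| ≤ C) →
        Tendsto (fun n => ∫ y, f y ∂(μ n)) atTop (nhds (∫ y, f y ∂m))) ∧
      (∀ s : ℝ, 0 ≤ s → ∫ y, Real.exp (-s * y) ∂m = φ s) := by
  obtain ⟨m, hm1, hm2, hm3, hm4⟩ := stmt4_key μ hfin hsupp φ hφ_cont hconv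
    (Ultrafilter.of atTop) (Ultrafilter.of_le _)
  refine ⟨m, hm1, hm2, ?_, hm4⟩
  intro f hf hfb
  rw [tendsto_iff_ultrafilter]
  intro V hV
  obtain ⟨m2, h21, h22, h23, h24⟩ := stmt4_key μ hfin hsupp φ hφ_cont hconv V hV
  haveI := hm1
  haveI := h21
  have hmm : m2 = m := stmt4_unique h22 hm2 (fun s hs => by rw [h24 s hs, hm4 s hs])
  have := h23 f hf hfb
  rwa [hmm] at this
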